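/- Let n and m be integers with 2 ≤ m ≤ ⌊n/2⌋ and gcd(n,m) > 1. Let u = max{v ∈ ℕ : v ≤ 2m-2 and gcd(v,n) > 1} (this set is nonempty since it contains m). Let s = s_1·s_2 where s_1 and s_2 are positive integers with s_1 < n/u, s_2 ≤ n and gcd(s_2, n) = 1. Then the set B_s = {s, 2s, ..., ms} has exactly m distinct residues modulo n, and the set of these residues belongs to 𝒜_n(m,n), i.e., f_n(B_s modulo n) = n. In particular, {1, 2, ..., m} belongs to 𝒜_n(m,n). -/

import Mathlib

open Finset

/-- The set of residues of `A` modulo `k`. -/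
def resSet (k : ℕ) (A : Finset ℕ) : Finset ℕ := A.image (· % k)

/-- The set `A + t = {a + t : a ∈ A}`. -/
def shiftSet (A : Finset ℕ) (t : ℕ) : Finset ℕ := A.image (· + t)

/-- Two finite sets of naturals are equal modulo `k` if they have the same residues mod `k`. -/
def eqMod (k : ℕ) (A B : Finset ℕ) : Prop := resSet k A = resSet k B

/-- `fk k A` is the least positive `l` with `A + l` equal to `A` modulo `k`. -/
noncomputable def fk (k : ℕ) (A : Finset ℕ) : ℕ :=
  sInf {l : ℕ | 0 < l ∧ eqMod k (shiftSet A l) A}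

/-- `𝒜(j, i)`: the collection of all `j`-element subsets of `{0, 1, ..., i-1}`. -/
def Acoll (j i : ℕ) : Finset (Finset ℕ) :=
  (Finset.range i).powerset.filter (fun A => A.card = j)

open scoped Classical in
/-- `𝒜_s(j, i)`: the members `A` of `𝒜(j, i)` with `f_i(A) = s`. -/
noncomputable def Asub (s j i : ℕ) : Finset (Finset ℕ) :=
  (Acoll j i).filter (fun A => fk i A = s)

/-- The orbit of `A` under shifting modulo `k`: the residue sets of `A + j`, `0 ≤ j < k`.
Two subsets of `{0, ..., k-1}` are `k`-equivalent iff their orbits coincide. -/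
def orb (k : ℕ) (A : Finset ℕ) : Finset (Finset ℕ) :=
  (Finset.range k).image (fun j => resSet k (shiftSet A j))

/-- `|𝒫_n(r, k)|`: the number of `k`-equivalence classes of `𝒜_n(r, k)`. -/
noncomputable def numClasses (n r k : ℕ) : ℕ := ((Asub n r k).image (orb k)).card

lemma main_lemma (n m u s₁ s₂ : ℕ) (hm2 : 2 ≤ m) (hmn : m ≤ n / 2)
    (hgcd : 1 < Nat.gcd n m)
    (hu3 : ∀ v : ℕ, v ≤ 2 * m - 2 → 1 < Nat.gcd v n → v ≤ u)
    (hs₁ : 0 < s₁) (hs₂ : 0 < s₂) (hs₁u : s₁ * u < n)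
    (hs₂g : Nat.gcd s₂ n = 1) :
    (((Finset.Icc 1 m).image (fun l => (l * (s₁ * s₂)) % n)).card = m ∧
      (Finset.Icc 1 m).image (fun l => (l * (s₁ * s₂)) % n) ∈ Asub n m n) := by
  have h2m : m * 2 ≤ n := (Nat.le_div_iff_mul_le (by norm_num)).1 hmn
  have hn1 : 1 < n := by omega
  have hmu : m ≤ u := hu3 m (by omega) (by rwa [Nat.gcd_comm])
  have hms₁ : m * s₁ < n := by
    calc m * s₁ ≤ u * s₁ := Nat.mul_le_mul_right _ hmu
    _ = s₁ * u := Nat.mul_comm _ _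
    _ < n := hs₁u
  have hs₁n : s₁ < n := by
    have : 1 * s₁ ≤ m * s₁ := Nat.mul_le_mul_right _ (by omega)
    omega
  obtain ⟨b, -, hb⟩ := Nat.exists_mul_mod_eq_one_of_coprime hs₂g hn1
  have hb' : s₂ * b ≡ 1 [MOD n] := by
    unfold Nat.ModEq; rw [hb, Nat.mod_eq_of_lt hn1]
  -- reduction from congruences with s₁*s₂ to congruences with s₁
  have red : ∀ x y l' : ℕ, x * (s₁ * s₂) + l' ≡ y * (s₁ * s₂) [MOD n] →
      x * s₁ + b * l' ≡ y * s₁ [MOD n] := by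
    intro x y l' h
    calc x * s₁ + b * l' = x * s₁ * 1 + b * l' := by ring
    _ ≡ x * s₁ * (s₂ * b) + b * l' [MOD n] := (hb'.symm.mul_left (x * s₁)).add_right _
    _ = b * (x * (s₁ * s₂) + l') := by ring
    _ ≡ b * (y * (s₁ * s₂)) [MOD n] := h.mul_left b
    _ = y * s₁ * (s₂ * b) := by ring
    _ ≡ y * s₁ * 1 [MOD n] := hb'.mul_left _
    _ = y * s₁ := by ring
  have hinj : ∀ x ∈ Finset.Icc 1 m, ∀ y ∈ Finset.Icc 1 m,
      x * (s₁ * s₂) % n = y * (s₁ * s₂) % n → x = y := by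
    intro x hx y hy h
    have h0 : x * (s₁ * s₂) + 0 ≡ y * (s₁ * s₂) [MOD n] := by
      simpa [Nat.ModEq] using h
    have h' := red x y 0 h0
    rw [Finset.mem_Icc] at hx hy
    have hx' : x * s₁ < n := lt_of_le_of_lt (Nat.mul_le_mul_right _ hx.2) hms₁
    have hy' : y * s₁ < n := lt_of_le_of_lt (Nat.mul_le_mul_right _ hy.2) hms₁
    have h'' : (x * s₁) % n = (y * s₁) % n := by
      have := h'
      unfold Nat.ModEq at this
      simpa using this
    rw [Nat.mod_eq_of_lt hx', Nat.mod_eq_of_lt hy'] at h''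
    exact Nat.eq_of_mul_eq_mul_right hs₁ h''
  have hcard : ((Finset.Icc 1 m).image (fun l => (l * (s₁ * s₂)) % n)).card = m := by
    rw [Finset.card_image_of_injOn (fun x hx y hy h => hinj x hx y hy h), Nat.card_Icc]
    omega
  set B := (Finset.Icc 1 m).image (fun l => (l * (s₁ * s₂)) % n) with hB
  have hsub : B ⊆ Finset.range n := by
    intro x hx
    rw [hB, Finset.mem_image] at hx
    obtain ⟨a, _, rfl⟩ := hx
    exact Finset.mem_range.2 (Nat.mod_lt _ (by omega))
  have hres : resSet n B = B := by
    rw [hB]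
    unfold resSet
    rw [Finset.image_image]
    apply Finset.image_congr
    intro x _
    simp only [Function.comp_apply]
    exact Nat.mod_mod_of_dvd _ dvd_rfl
  have hnmem : eqMod n (shiftSet B n) B := by
    unfold eqMod shiftSet resSet
    rw [Finset.image_image]
    apply Finset.image_congr
    intro x _
    simp only [Function.comp_apply]
    exact Nat.add_mod_right x n
  have hlow : ∀ l, 0 < l → eqMod n (shiftSet B l) B → n ≤ l := by
    intro l hl hEq
    by_contra hln
    push_neg at hln
    have hEq' : resSet n (shiftSet B l) = B :=
      (show resSet n (shiftSet B l) = resSet n B from hEq).trans hres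
    have key : ∀ j ∈ Finset.Icc 1 m, ∃ j' ∈ Finset.Icc 1 m,
        (j * (s₁ * s₂) + l) % n = (j' * (s₁ * s₂)) % n := by
      intro j hj
      have hx : (j * (s₁ * s₂) + l) % n ∈ resSet n (shiftSet B l) := by
        unfold resSet shiftSet
        refine Finset.mem_image.2 ⟨j * (s₁ * s₂) % n + l, ?_, ?_⟩
        · exact Finset.mem_image.2 ⟨j * (s₁ * s₂) % n,
            Finset.mem_image.2 ⟨j, hj, rfl⟩, rfl⟩
        · exact Nat.mod_add_mod _ _ _
      rw [hEq', hB, Finset.mem_image] at hx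
      obtain ⟨j', hj', he⟩ := hx
      exact ⟨j', hj', he.symm⟩
    set v := b * l % n with hv
    have hv_lt : v < n := Nat.mod_lt _ (by omega)
    have key2 : ∀ j ∈ Finset.Icc 1 m, ∃ j' ∈ Finset.Icc 1 m,
        (j * s₁ + v) % n = (j' * s₁) % n := by
      intro j hj
      obtain ⟨j', hj', he⟩ := key j hj
      have h' := red j j' l he
      refine ⟨j', hj', ?_⟩
      rw [hv, Nat.add_mod_mod]
      exact h'
    have hv_pos : 0 < v := by
      rcases Nat.eq_zero_or_pos v with h0 | h
      · exfalso
        have hdvd : b * l ≡ 0 [MOD n] := by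
          unfold Nat.ModEq
          rw [Nat.zero_mod]
          exact hv ▸ h0
        have hl0 : l ≡ 0 [MOD n] := by
          calc l = 1 * l := (one_mul l).symm
          _ ≡ (s₂ * b) * l [MOD n] := hb'.symm.mul_right l
          _ = s₂ * (b * l) := by ring
          _ ≡ s₂ * 0 [MOD n] := hdvd.mul_left s₂
          _ = 0 := by ring
        have := Nat.le_of_dvd hl (Nat.modEq_zero_iff_dvd.1 hl0)
        omega
      · exact h
    -- step 1: j = 1
    obtain ⟨j₁, hj₁, e1⟩ := key2 1 (Finset.mem_Icc.2 ⟨le_refl 1, by omega⟩)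
    rw [one_mul] at e1
    rw [Finset.mem_Icc] at hj₁
    have hj₁s : j₁ * s₁ < n := lt_of_le_of_lt (Nat.mul_le_mul_right _ hj₁.2) hms₁
    rw [Nat.mod_eq_of_lt hj₁s] at e1
    have hq1 := Nat.div_add_mod (s₁ + v) n
    have hqlt1 : (s₁ + v) / n < 2 := (Nat.div_lt_iff_lt_mul (by omega)).2 (by omega)
    rw [e1] at hq1
    have hj₁low : s₁ ≤ j₁ * s₁ := by
      calc s₁ = 1 * s₁ := (one_mul s₁).symm
      _ ≤ j₁ * s₁ := Nat.mul_le_mul_right _ hj₁.1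
    -- exclude wrap: s₁ + v = j₁ * s₁
    have e1'' : s₁ + v = j₁ * s₁ := by
      interval_cases h : (s₁ + v) / n <;> omega
    have hj₁2 : 2 ≤ j₁ := by
      by_contra hc
      have : j₁ * s₁ ≤ 1 * s₁ := Nat.mul_le_mul_right _ (by omega)
      omega
    set c := j₁ - 1 with hcdef
    have hcexp : j₁ * s₁ = c * s₁ + s₁ := by
      have : j₁ = c + 1 := by omega
      rw [this]; ring
    have hvc : v = c * s₁ := by omega
    have hc1 : 1 ≤ c := by omega
    have hcm : c ≤ m - 1 := by omega
    -- step 2 : j = m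
    obtain ⟨j₂, hj₂, e2⟩ := key2 m (Finset.mem_Icc.2 ⟨by omega, le_refl m⟩)
    rw [Finset.mem_Icc] at hj₂
    have hj₂s : j₂ * s₁ < n := lt_of_le_of_lt (Nat.mul_le_mul_right _ hj₂.2) hms₁
    rw [Nat.mod_eq_of_lt hj₂s] at e2
    have hq2 := Nat.div_add_mod (m * s₁ + v) n
    have hqlt2 : (m * s₁ + v) / n < 2 := (Nat.div_lt_iff_lt_mul (by omega)).2 (by omega)
    rw [e2] at hq2
    have hmc : (m + c) * s₁ = m * s₁ + c * s₁ := by ring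
    have e2'' : m * s₁ + v = n + j₂ * s₁ := by
      have hne : (m + c) * s₁ ≠ j₂ * s₁ := fun hh => by
        have := Nat.eq_of_mul_eq_mul_right hs₁ hh; omega
      interval_cases h : (m * s₁ + v) / n <;> omega
    have hwj : j₂ < m + c := by
      have : j₂ * s₁ < (m + c) * s₁ := by omega
      exact Nat.lt_of_mul_lt_mul_right this
    set w := m + c - j₂ with hwdef
    have hwexp : (j₂ + w) * s₁ = j₂ * s₁ + w * s₁ := by ring
    have hwexp2 : (j₂ + w) * s₁ = (m + c) * s₁ := by
      have : j₂ + w = m + c := by omega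
      rw [this]
    have hwn : w * s₁ = n := by omega
    have hw2 : 2 ≤ w := by
      by_contra hc'
      have : w * s₁ ≤ 1 * s₁ := Nat.mul_le_mul_right _ (by omega)
      omega
    have hwu : w ≤ u := hu3 w (by omega)
      (by rw [Nat.gcd_eq_left ⟨s₁, hwn.symm⟩]; omega)
    have : w * s₁ ≤ u * s₁ := Nat.mul_le_mul_right _ hwu
    have hcomm : u * s₁ = s₁ * u := Nat.mul_comm _ _
    omega
  have hfk : fk n B = n := by
    have hmemn : n ∈ {l : ℕ | 0 < l ∧ eqMod n (shiftSet B l) B} := ⟨by omega, hnmem⟩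
    unfold fk
    refine le_antisymm (Nat.sInf_le hmemn) ?_
    obtain ⟨h1, h2⟩ := Nat.sInf_mem ⟨n, hmemn⟩
    exact hlow _ h1 h2
  refine ⟨hcard, ?_⟩
  simp only [Asub, Acoll, Finset.mem_filter, Finset.mem_powerset]
  exact ⟨⟨hsub, hcard⟩, hfk⟩


/-- with `2 ≤ m ≤ ⌊n/2⌋`, `gcd(n, m) > 1`,
`u = max {v : v ≤ 2m - 2, gcd(v, n) > 1}`, and `s = s₁ s₂` with `s₁ < n / u`, `s₂ ≤ n`,
`gcd(s₂, n) = 1`: the set `B_s = {s, 2s, ..., ms}` has exactly `m` distinct residues modulo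
`n`, and the set of these residues belongs to `𝒜_n(m, n)`; in particular
`{1, 2, ..., m} ∈ 𝒜_n(m, n)`. -/
theorem Bs_mem_Asub (n m u s₁ s₂ : ℕ) (hm2 : 2 ≤ m) (hmn : m ≤ n / 2)
    (hgcd : 1 < Nat.gcd n m)
    (hu1 : u ≤ 2 * m - 2) (hu2 : 1 < Nat.gcd u n)
    (hu3 : ∀ v : ℕ, v ≤ 2 * m - 2 → 1 < Nat.gcd v n → v ≤ u)
    (hs₁ : 0 < s₁) (hs₂ : 0 < s₂) (hs₁u : s₁ * u < n) (hs₂n : s₂ ≤ n)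
    (hs₂g : Nat.gcd s₂ n = 1) :
    (((Finset.Icc 1 m).image (fun l => (l * (s₁ * s₂)) % n)).card = m ∧
      (Finset.Icc 1 m).image (fun l => (l * (s₁ * s₂)) % n) ∈ Asub n m n) ∧
    Finset.Icc 1 m ∈ Asub n m n := by
  have h2m : m * 2 ≤ n := (Nat.le_div_iff_mul_le (by norm_num)).1 hmn
  have hmu : m ≤ u := hu3 m (by omega) (by rwa [Nat.gcd_comm])
  refine ⟨main_lemma n m u s₁ s₂ hm2 hmn hgcd hu3 hs₁ hs₂ hs₁u hs₂g, ?_⟩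
  have h11 := main_lemma n m u 1 1 hm2 hmn hgcd hu3 one_pos one_pos
    (by omega) (Nat.gcd_one_left n)
  have himg : (Finset.Icc 1 m).image (fun l => (l * (1 * 1)) % n) = Finset.Icc 1 m := by
    ext x
    simp only [Finset.mem_image, Finset.mem_Icc, mul_one]
    constructor
    · rintro ⟨a, ha, rfl⟩
      rw [Nat.mod_eq_of_lt (by omega)]
      exact ha
    · intro hx
      exact ⟨x, hx, by rw [Nat.mod_eq_of_lt (by omega)]⟩
  exact himg ▸ h11.2
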